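/- Let p ≥ 1, let σ₁ ≥ σ₂ ≥ … ≥ σ_{2p} be real numbers, and let S₀ be a real symmetric 2p×2p matrix with ordered spectrum (σ₁, …, σ_{2p}). Let a and b be real symmetric p×p matrices with ordered spectra σ₋ = (σ₁, σ₃, …, σ_{2p−1}) and σ₊ = (σ₂, σ₄, …, σ_{2p}) respectively, and let (ν₁, …, ν_p) be the ordered spectrum of a + b. Then there exists a hermitian structure J on ℝ^{2p} (JᵀJ = I, J² = −I) such that the characteristic polynomial of S₀ + J⁻¹S₀J equals ∏_{i=1}^{p} (X − ν_i)², i.e. the ordered spectrum of S₀ + J⁻¹S₀J is the doubled list (ν₁, ν₁, …, ν_p, ν_p). (This is the inclusion 𝒫₁ ⊂ Im ℱ.) -/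

import Mathlib

open Matrix Polynomial

/-- Interleaving equivalence `Fin p ⊕ Fin p ≃ Fin (2*p)`:
`inl i ↦ 2i`, `inr i ↦ 2i+1`. -/
def myPairEquiv (p : ℕ) : Fin p ⊕ Fin p ≃ Fin (2 * p) where
  toFun := Sum.elim (fun i => ⟨2 * i.val, (by have := i.isLt; omega : 2 * i.val + 0 < 2 * p)⟩)
                    (fun i => ⟨2 * i.val + 1, (by have := i.isLt; omega : 2 * i.val + 1 + 0 < 2 * p)⟩)
  invFun j := if j.val % 2 = 0 then Sum.inl ⟨j.val / 2, by have := j.isLt; omega⟩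
              else Sum.inr ⟨j.val / 2, by have := j.isLt; omega⟩
  left_inv x := by
    rcases x with ⟨i, hi⟩ | ⟨i, hi⟩
    · simp only [Sum.elim_inl]
      simp only [show 2 * i % 2 = 0 by omega, ↓reduceIte]
      congr 1
      ext
      simp only []
      omega
    · simp only [Sum.elim_inr]
      simp only [show ¬ (2 * i + 1) % 2 = 0 by omega, ↓reduceIte]
      congr 1
      ext
      simp only []
      omega
  right_inv j := by
    rcases j with ⟨j, hj⟩
    by_cases h : j % 2 = 0
    · simp only [if_pos h, Sum.elim_inl]
      ext
      simp only []
      omega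
    · simp only [if_neg h, Sum.elim_inr]
      ext
      simp only []
      omega


section Aux
variable {n : Type*} [Fintype n] [DecidableEq n]

lemma my_charpoly_conj (U V A : Matrix n n ℝ) (h : U * V = 1) :
    (U * A * V).charpoly = A.charpoly := by
  have h' : (U.map (C : ℝ →+* ℝ[X])) * (V.map (C : ℝ →+* ℝ[X])) = 1 := by
    rw [← Matrix.map_mul, h]; simp
  have hcomm := Matrix.scalar_commute (n := n) (X : ℝ[X]) (fun r' => Commute.all _ _)
    (U.map (C : ℝ →+* ℝ[X]))
  have hch : charmatrix (U * A * V)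
      = (U.map (C : ℝ →+* ℝ[X])) * charmatrix A * (V.map (C : ℝ →+* ℝ[X])) := by
    unfold charmatrix
    simp only [RingHom.mapMatrix_apply, Matrix.map_mul]
    rw [Matrix.mul_sub, Matrix.sub_mul]
    congr 1
    rw [← hcomm.eq, Matrix.mul_assoc, h', Matrix.mul_one]
  rw [Matrix.charpoly, hch, Matrix.det_mul, Matrix.det_mul, Matrix.charpoly]
  have hd : (U.map (C : ℝ →+* ℝ[X])).det * (V.map (C : ℝ →+* ℝ[X])).det = 1 := by
    rw [← Matrix.det_mul, h', Matrix.det_one]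
  calc (U.map (C : ℝ →+* ℝ[X])).det * (charmatrix A).det * (V.map (C : ℝ →+* ℝ[X])).det
      = (charmatrix A).det * ((U.map (C : ℝ →+* ℝ[X])).det * (V.map (C : ℝ →+* ℝ[X])).det) := by
        ring
    _ = (charmatrix A).det := by rw [hd, mul_one]

lemma my_charpoly_diagonal (d : n → ℝ) :
    (diagonal d).charpoly = ∏ i, (X - C (d i)) := by
  have : charmatrix (diagonal d) = diagonal (fun i => (X : ℝ[X]) - C (d i)) := by
    ext i j
    by_cases hij : i = j
    · subst hij; simp
    · simp [hij, diagonal_apply_ne _ hij]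
  rw [Matrix.charpoly, this, det_diagonal]

lemma my_perm_conj (e : Equiv.Perm n) (d : n → ℝ) :
    ∃ P : Matrix n n ℝ, Pᵀ * P = 1 ∧ P * Pᵀ = 1 ∧
      P * diagonal d * Pᵀ = diagonal (d ∘ ⇑e) := by
  refine ⟨(1 : Matrix n n ℝ).submatrix ⇑e id, ?_, ?_, ?_⟩
  · rw [transpose_submatrix, transpose_one]
    rw [show ((1 : Matrix n n ℝ).submatrix id ⇑e) * ((1 : Matrix n n ℝ).submatrix ⇑e id)
        = ((1 : Matrix n n ℝ) * 1).submatrix id id from Matrix.submatrix_mul_equiv 1 1 id e id]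
    simp
  · rw [transpose_submatrix, transpose_one]
    rw [show ((1 : Matrix n n ℝ).submatrix ⇑e id) * ((1 : Matrix n n ℝ).submatrix id ⇑e)
        = ((1 : Matrix n n ℝ) * 1).submatrix ⇑e ⇑e by
          have := Matrix.submatrix_mul_equiv (1 : Matrix n n ℝ) (1 : Matrix n n ℝ)
            ⇑e (Equiv.refl n) ⇑e
          simpa using this]
    simp [Matrix.submatrix_one_equiv]
  · rw [transpose_submatrix, transpose_one]
    have h1 : (1 : Matrix n n ℝ).submatrix ⇑e id * diagonal d
        = (diagonal d).submatrix ⇑e id := by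
      have := Matrix.one_submatrix_mul (α := ℝ) ⇑e (Equiv.refl n) (diagonal d)
      simpa using this
    rw [h1]
    have h2 : (diagonal d).submatrix ⇑e id * (1 : Matrix n n ℝ).submatrix id ⇑e
        = (diagonal d).submatrix ⇑e ⇑e := by
      have := Matrix.mul_submatrix_one (α := ℝ) (Equiv.refl n) ⇑e
        ((diagonal d).submatrix ⇑e id)
      simpa [Matrix.submatrix_submatrix] using this
    rw [h2, Matrix.submatrix_diagonal_equiv]

end Aux

lemma my_prod_roots {m : ℕ} (f : Fin m → ℝ) :
    (∏ i, (X - C (f i))).roots = Finset.univ.val.map f := by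
  rw [show (∏ i, (X - C (f i)))
      = ((Finset.univ.val.map f).map (fun r => (X : ℝ[X]) - C r)).prod by
        rw [Multiset.map_map, Finset.prod_eq_multiset_prod]; rfl]
  exact Polynomial.roots_multiset_prod_X_sub_C _

lemma my_exists_perm {m : ℕ} (f g : Fin m → ℝ)
    (h : ∏ i, (X - C (f i)) = ∏ i, (X - C (g i))) :
    ∃ e : Equiv.Perm (Fin m), f = g ∘ ⇑e := by
  have hms : Finset.univ.val.map f = Finset.univ.val.map g := by
    rw [← my_prod_roots, ← my_prod_roots, h]
  have hperm : (List.ofFn f).Perm (List.ofFn g) := by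
    rw [← Multiset.coe_eq_coe]
    simpa [Fin.univ_val_map] using hms
  have hsorted : f ∘ ⇑(Tuple.sort f) = g ∘ ⇑(Tuple.sort g) := by
    apply List.ofFn_injective
    apply List.Perm.eq_of_sortedLE
    rotate_right
    · exact ((Tuple.sort f).ofFn_comp_perm f).trans
        (hperm.trans ((Tuple.sort g).ofFn_comp_perm g).symm)
    · exact (Tuple.monotone_sort f).sortedLE_ofFn
    · exact (Tuple.monotone_sort g).sortedLE_ofFn
  refine ⟨((Tuple.sort f).symm).trans (Tuple.sort g), ?_⟩
  funext x
  have := congrFun hsorted ((Tuple.sort f).symm x)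
  simpa using this

/-- Two real symmetric matrices with the same characteristic polynomial are
orthogonally conjugate. -/
lemma my_exists_orthogonal_conj {m : ℕ} (A B : Matrix (Fin m) (Fin m) ℝ)
    (hA : A.IsSymm) (hB : B.IsSymm) (h : A.charpoly = B.charpoly) :
    ∃ Q : Matrix (Fin m) (Fin m) ℝ, Qᵀ * Q = 1 ∧ Q * Qᵀ = 1 ∧ A = Q * B * Qᵀ := by
  have hA' : A.IsHermitian := by
    rwa [Matrix.IsHermitian, Matrix.conjTranspose_eq_transpose_of_trivial]
  have hB' : B.IsHermitian := by
    rwa [Matrix.IsHermitian, Matrix.conjTranspose_eq_transpose_of_trivial]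
  set UA : Matrix (Fin m) (Fin m) ℝ := (hA'.eigenvectorUnitary : Matrix (Fin m) (Fin m) ℝ)
  set UB : Matrix (Fin m) (Fin m) ℝ := (hB'.eigenvectorUnitary : Matrix (Fin m) (Fin m) ℝ)
  have hstar : ∀ M : Matrix (Fin m) (Fin m) ℝ, star M = Mᵀ := fun M => by
    rw [Matrix.star_eq_conjTranspose, Matrix.conjTranspose_eq_transpose_of_trivial]
  have hUA1 : UAᵀ * UA = 1 := by
    rw [← hstar]; exact (Unitary.mem_iff.mp hA'.eigenvectorUnitary.2).1
  have hUA2 : UA * UAᵀ = 1 := by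
    rw [← hstar]; exact (Unitary.mem_iff.mp hA'.eigenvectorUnitary.2).2
  have hUB1 : UBᵀ * UB = 1 := by
    rw [← hstar]; exact (Unitary.mem_iff.mp hB'.eigenvectorUnitary.2).1
  have hUB2 : UB * UBᵀ = 1 := by
    rw [← hstar]; exact (Unitary.mem_iff.mp hB'.eigenvectorUnitary.2).2
  have hspecA : A = UA * diagonal hA'.eigenvalues * UAᵀ := by
    have := hA'.spectral_theorem
    rwa [Unitary.conjStarAlgAut_apply, hstar, RCLike.ofReal_real_eq_id, Function.id_comp] at this
  have hspecB : B = UB * diagonal hB'.eigenvalues * UBᵀ := by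
    have := hB'.spectral_theorem
    rwa [Unitary.conjStarAlgAut_apply, hstar, RCLike.ofReal_real_eq_id, Function.id_comp] at this
  have hdiagB : UBᵀ * B * UB = diagonal hB'.eigenvalues := by
    have := hB'.conjStarAlgAut_star_eigenvectorUnitary
    rwa [Unitary.conjStarAlgAut_apply, Unitary.coe_star, star_star, hstar, RCLike.ofReal_real_eq_id, Function.id_comp] at this
  have hcpA : A.charpoly = ∏ i, (X - C (hA'.eigenvalues i)) :=
    (congrArg Matrix.charpoly hspecA).trans
      ((my_charpoly_conj _ _ _ hUA2).trans (my_charpoly_diagonal _))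
  have hcpB : B.charpoly = ∏ i, (X - C (hB'.eigenvalues i)) :=
    (congrArg Matrix.charpoly hspecB).trans
      ((my_charpoly_conj _ _ _ hUB2).trans (my_charpoly_diagonal _))
  obtain ⟨e, he⟩ := my_exists_perm hA'.eigenvalues hB'.eigenvalues (by
    rw [← hcpA, ← hcpB, h])
  obtain ⟨P, hP1, hP2, hPD⟩ := my_perm_conj e hB'.eigenvalues
  have cancel : ∀ M N : Matrix (Fin m) (Fin m) ℝ, M * N = 1 →
      ∀ Y : Matrix (Fin m) (Fin m) ℝ, M * (N * Y) = Y := fun M N hMN Y => by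
    rw [← Matrix.mul_assoc, hMN, Matrix.one_mul]
  refine ⟨UA * P * UBᵀ, ?_, ?_, ?_⟩
  · simp only [Matrix.transpose_mul, Matrix.transpose_transpose, Matrix.mul_assoc]
    rw [cancel _ _ hUA1, cancel _ _ hP1, hUB2]
  · simp only [Matrix.transpose_mul, Matrix.transpose_transpose, Matrix.mul_assoc]
    rw [cancel _ _ hUB1, cancel _ _ hP2, hUA2]
  · rw [Matrix.transpose_mul, Matrix.transpose_mul, Matrix.transpose_transpose]
    calc A = UA * diagonal hA'.eigenvalues * UAᵀ := hspecA
      _ = UA * (P * (UBᵀ * B * UB) * Pᵀ) * UAᵀ := by rw [hdiagB, hPD, ← he]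
      _ = UA * P * UBᵀ * B * (UB * (Pᵀ * UAᵀ)) := by simp only [Matrix.mul_assoc]

/-- the inclusion `𝒫₁ ⊆ Im ℱ`. Let `S₀` be a real symmetric
`2p × 2p` matrix with ordered spectrum `σ₁ ≥ ⋯ ≥ σ_{2p}`, and let `a`, `b` be real
symmetric `p × p` matrices with ordered spectra `σ₋ = (σ₁, σ₃, …, σ_{2p-1})` and
`σ₊ = (σ₂, σ₄, …, σ_{2p})` respectively.  If `(ν₁ ≥ ⋯ ≥ ν_p)` is the ordered spectrum
of `a + b`, then there is a hermitian structure `J` on `ℝ^{2p}` such that the ordered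
spectrum of `S₀ + J⁻¹ S₀ J` is the doubled list `(ν₁, ν₁, …, ν_p, ν_p)`, i.e.
its characteristic polynomial is `∏ (X - νᵢ)²`. -/
theorem P1_subset_image_frequency_map
    (p : ℕ) (hp : 1 ≤ p)
    (σ : Fin (2 * p) → ℝ) (hσ : Antitone σ)
    (S₀ : Matrix (Fin (2 * p)) (Fin (2 * p)) ℝ) (hS₀ : S₀.IsSymm)
    (hS₀spec : S₀.charpoly = ∏ i : Fin (2 * p), (Polynomial.X - Polynomial.C (σ i)))
    (a b : Matrix (Fin p) (Fin p) ℝ) (ha : a.IsSymm) (hb : b.IsSymm)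
    (haspec : a.charpoly =
      ∏ i : Fin p, (Polynomial.X - Polynomial.C (σ ⟨2 * i.val, by have := i.isLt; omega⟩)))
    (hbspec : b.charpoly =
      ∏ i : Fin p, (Polynomial.X - Polynomial.C (σ ⟨2 * i.val + 1, by have := i.isLt; omega⟩)))
    (ν : Fin p → ℝ) (hν : Antitone ν)
    (hνspec : (a + b).charpoly = ∏ i : Fin p, (Polynomial.X - Polynomial.C (ν i))) :
    ∃ J : Matrix (Fin (2 * p)) (Fin (2 * p)) ℝ,
      Jᵀ * J = 1 ∧ J * J = -1 ∧
      (S₀ + J⁻¹ * S₀ * J).charpoly =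
        ∏ i : Fin p, (Polynomial.X - Polynomial.C (ν i)) ^ 2 := by
  classical
  set ee := myPairEquiv p with hee
  set S : Matrix (Fin (2 * p)) (Fin (2 * p)) ℝ :=
    reindex ee ee (fromBlocks a 0 0 b) with hSdef
  set J₀ : Matrix (Fin (2 * p)) (Fin (2 * p)) ℝ :=
    reindex ee ee (fromBlocks 0 (-1) 1 0) with hJ₀def
  have rmul : ∀ M N : Matrix (Fin p ⊕ Fin p) (Fin p ⊕ Fin p) ℝ,
      reindex ee ee M * reindex ee ee N = reindex ee ee (M * N) := by
    intro M N
    simp [reindex_apply]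
  have rtrans : ∀ M : Matrix (Fin p ⊕ Fin p) (Fin p ⊕ Fin p) ℝ,
      (reindex ee ee M)ᵀ = reindex ee ee Mᵀ := by
    intro M
    simp [reindex_apply, transpose_submatrix]
  have rsub : ∀ M N : Matrix (Fin p ⊕ Fin p) (Fin p ⊕ Fin p) ℝ,
      reindex ee ee M - reindex ee ee N = reindex ee ee (M - N) := by
    intro M N
    simp [reindex_apply, Matrix.submatrix_sub]
  -- block computations
  have hb1 : ((fromBlocks 0 (-1) 1 0 : Matrix (Fin p ⊕ Fin p) (Fin p ⊕ Fin p) ℝ))ᵀ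
      * (fromBlocks 0 (-1) 1 0 : Matrix (Fin p ⊕ Fin p) (Fin p ⊕ Fin p) ℝ) = 1 := by
    rw [fromBlocks_transpose, fromBlocks_multiply, ← fromBlocks_one]
    congr 1 <;> simp
  have hb2 : (fromBlocks 0 (-1) 1 0 : Matrix (Fin p ⊕ Fin p) (Fin p ⊕ Fin p) ℝ)
      * (fromBlocks 0 (-1) 1 0 : Matrix (Fin p ⊕ Fin p) (Fin p ⊕ Fin p) ℝ) = -1 := by
    rw [fromBlocks_multiply, ← fromBlocks_one, fromBlocks_neg]
    congr 1 <;> simp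
  have hb3 : (fromBlocks 0 (-1) 1 0 : Matrix (Fin p ⊕ Fin p) (Fin p ⊕ Fin p) ℝ)
      * ((fromBlocks a 0 0 b)
        * (fromBlocks 0 (-1) 1 0 : Matrix (Fin p ⊕ Fin p) (Fin p ⊕ Fin p) ℝ))
      = fromBlocks (-b) 0 0 (-a) := by
    rw [fromBlocks_multiply, fromBlocks_multiply]
    congr 1 <;> simp
  have hb4 : (fromBlocks a 0 0 b) - fromBlocks (-b) 0 0 (-a)
      = fromBlocks (a + b) 0 0 (a + b) := by
    rw [sub_eq_add_neg, fromBlocks_neg, fromBlocks_add]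
    congr 1 <;> simp [add_comm]
  -- J₀ is a hermitian structure
  have hJ₀1 : J₀ᵀ * J₀ = 1 := by
    rw [hJ₀def, rtrans, rmul, hb1]
    simp [reindex_apply]
  have hJ₀2 : J₀ * J₀ = -1 := by
    rw [hJ₀def, rmul, hb2]
    simp [reindex_apply, Matrix.submatrix_neg]
  -- S is symmetric
  have hSsymm : S.IsSymm := by
    rw [Matrix.IsSymm, hSdef, rtrans]
    congr 1
    rw [fromBlocks_transpose, ha.eq, hb.eq]
    simp
  -- S has the same characteristic polynomial as S₀
  have hprod : ∏ i : Fin (2 * p), (X - C (σ i)) =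
      (∏ i : Fin p, (X - C (σ ⟨2 * i.val, by have := i.isLt; omega⟩))) *
      ∏ i : Fin p, (X - C (σ ⟨2 * i.val + 1, by have := i.isLt; omega⟩)) := by
    rw [← Fintype.prod_equiv (myPairEquiv p)
      (fun x => (X - C (σ (myPairEquiv p x)))) (fun i => X - C (σ i)) (fun x => rfl)]
    rw [Fintype.prod_sum_type]
    rfl
  have hcpS : S₀.charpoly = S.charpoly := by
    rw [hSdef, Matrix.charpoly_reindex, Matrix.charpoly_fromBlocks_zero₁₂,
      hS₀spec, haspec, hbspec, hprod]
  -- orthogonal conjugation between S₀ and S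
  obtain ⟨Q, hQ1, hQ2, hQS⟩ := my_exists_orthogonal_conj S₀ S hS₀ hSsymm hcpS
  have cancel : ∀ M N : Matrix (Fin (2 * p)) (Fin (2 * p)) ℝ, M * N = 1 →
      ∀ Y : Matrix (Fin (2 * p)) (Fin (2 * p)) ℝ, M * (N * Y) = Y := fun M N hMN Y => by
    rw [← Matrix.mul_assoc, hMN, Matrix.one_mul]
  have hJJ : (Q * J₀ * Qᵀ) * (Q * J₀ * Qᵀ) = -1 := by
    simp only [Matrix.mul_assoc]
    rw [cancel _ _ hQ1, ← Matrix.mul_assoc J₀ J₀ Qᵀ, hJ₀2, Matrix.neg_mul,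
      Matrix.one_mul, Matrix.mul_neg, hQ2]
  refine ⟨Q * J₀ * Qᵀ, ?_, hJJ, ?_⟩
  · simp only [Matrix.transpose_mul, Matrix.transpose_transpose, Matrix.mul_assoc]
    rw [cancel _ _ hQ1, cancel _ _ hJ₀1, hQ2]
  · have hJinv : (Q * J₀ * Qᵀ)⁻¹ = -(Q * J₀ * Qᵀ) :=
      Matrix.inv_eq_right_inv (by rw [Matrix.mul_neg, hJJ, neg_neg])
    rw [hJinv]
    have hmid : Q * J₀ * Qᵀ * (Q * S * Qᵀ) * (Q * J₀ * Qᵀ)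
        = Q * (J₀ * S * J₀) * Qᵀ := by
      simp only [Matrix.mul_assoc]
      rw [cancel _ _ hQ1, cancel _ _ hQ1]
    have key : S₀ + -(Q * J₀ * Qᵀ) * S₀ * (Q * J₀ * Qᵀ)
        = Q * (S - J₀ * S * J₀) * Qᵀ := by
      rw [Matrix.mul_sub, Matrix.sub_mul]
      rw [Matrix.neg_mul, Matrix.neg_mul, ← sub_eq_add_neg]
      rw [hQS, hmid]
    rw [key, my_charpoly_conj _ _ _ hQ2]
    have hT : S - J₀ * S * J₀ = reindex ee ee (fromBlocks (a + b) 0 0 (a + b)) := by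
      rw [hSdef, hJ₀def, Matrix.mul_assoc, rmul, rmul, hb3, rsub, hb4]
    rw [hT, Matrix.charpoly_reindex, Matrix.charpoly_fromBlocks_zero₁₂, hνspec,
      ← Finset.prod_mul_distrib]
    exact Finset.prod_congr rfl (fun i _ => (sq _).symm)
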